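/- (Linear BSΔE) Let g_n(z) = A_n^T z + B_n where {A_n} is a Θ-valued predictable process and {B_n} a predictable real process, with Θ the convex hull of {v_0,...,v_d}. Then E^g_n(Y) = Ê[ Y + Σ_{i=n+1}^N B_i | F_n ], where Ê is expectation under the measure P̂ associated with the predictable Δ_d-valued process {P̂_n} satisfying A_n = v P̂_n. -/
import Mathlib


open scoped Classical BigOperators
open Matrix

noncomputable section

/-- Path space: `N` steps, each increment indexed by `Fin (d+1)` (the increment at
step `n` being `v_{ω n}`). -/
abbrev PathSp (N d : ℕ) := Fin N → Fin (d + 1)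

/-- Two paths agree on the first `n` coordinates. -/
def agreeOn {N d : ℕ} (n : ℕ) (ω ω' : PathSp N d) : Prop :=
  ∀ k : Fin N, (k : ℕ) < n → ω k = ω' k

/-- A function of the path is `F_n`-measurable: it depends only on the first `n`
coordinates. -/
def MeasUpTo {N d : ℕ} {α : Type*} (n : ℕ) (f : PathSp N d → α) : Prop :=
  ∀ ω ω', agreeOn n ω ω' → f ω = f ω'

/-- Sum of `P ω' * f ω'` over the `F_n`-cylinder of `ω`. -/
def cylSum {N d : ℕ} (P : PathSp N d → ℝ) (n : ℕ) (f : PathSp N d → ℝ)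
    (ω : PathSp N d) : ℝ :=
  ∑ ω' : PathSp N d, if agreeOn n ω ω' then P ω' * f ω' else 0

/-- Elementary conditional expectation of `f` given the first `n` coordinates,
under the probability mass function `P`. -/
def cExp {N d : ℕ} (P : PathSp N d → ℝ) (n : ℕ) (f : PathSp N d → ℝ)
    (ω : PathSp N d) : ℝ :=
  cylSum P n f ω / cylSum P n (fun _ => 1) ω

lemma agreeOn_mono {N d : ℕ} {m n : ℕ} (h : m ≤ n) {ω ω' : PathSp N d}
    (hag : agreeOn n ω ω') : agreeOn m ω ω' := fun k hk => hag k (lt_of_lt_of_le hk h)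

lemma agreeOn_update {N d : ℕ} {n : ℕ} (hn : n < N) (ω : PathSp N d) (j : Fin (d+1)) :
    agreeOn n ω (Function.update ω ⟨n, hn⟩ j) := by
  intro k hk
  rw [Function.update_of_ne]
  intro h
  exact absurd (congrArg Fin.val h) (by simp; omega)

lemma cylSum_partition {N d : ℕ} (P f : PathSp N d → ℝ) {n : ℕ} (hn : n < N) (ω : PathSp N d) :
    cylSum P n f ω = ∑ j : Fin (d+1), cylSum P (n+1) f (Function.update ω ⟨n, hn⟩ j) := by
  unfold cylSum
  rw [Finset.sum_comm]
  refine Finset.sum_congr rfl fun ω' _ => ?_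
  have key : ∀ j, agreeOn (n+1) (Function.update ω ⟨n,hn⟩ j) ω' ↔
      (agreeOn n ω ω' ∧ ω' ⟨n,hn⟩ = j) := by
    intro j
    constructor
    · intro h
      refine ⟨fun k hk => ?_, ?_⟩
      · have hne : k ≠ (⟨n, hn⟩ : Fin N) := by
          intro hh; exact absurd (congrArg Fin.val hh) (by simp; omega)
        have := h k (by omega)
        rwa [Function.update_of_ne hne] at this
      · have := h ⟨n,hn⟩ (by simp)
        rw [Function.update_self] at this; exact this.symm
    · rintro ⟨h1, h2⟩ k hk
      by_cases hkm : k = (⟨n,hn⟩ : Fin N)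
      · subst hkm; rw [Function.update_self]; exact h2.symm
      · rw [Function.update_of_ne hkm]
        refine h1 k ?_
        have : (k:ℕ) ≠ n := fun hh => hkm (Fin.ext hh)
        omega
  refine Eq.symm ?_
  calc ∑ j, (if agreeOn (n+1) (Function.update ω ⟨n,hn⟩ j) ω' then P ω' * f ω' else 0)
      = ∑ j, (if ω' ⟨n,hn⟩ = j then (if agreeOn n ω ω' then P ω' * f ω' else 0) else 0) := by
        refine Finset.sum_congr rfl fun j _ => ?_
        simp only [key]
        by_cases h1 : agreeOn n ω ω' <;> by_cases h2 : ω' ⟨n,hn⟩ = j <;> simp [h1, h2]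
    _ = _ := by rw [Finset.sum_ite_eq]; simp

lemma cylSum_add {N d : ℕ} (P f g : PathSp N d → ℝ) (n : ℕ) (ω : PathSp N d) :
    cylSum P n (fun ω' => f ω' + g ω') ω = cylSum P n f ω + cylSum P n g ω := by
  unfold cylSum
  rw [← Finset.sum_add_distrib]
  refine Finset.sum_congr rfl fun ω' _ => ?_
  by_cases h : agreeOn n ω ω' <;> simp [h] <;> ring

lemma cylSum_congr {N d : ℕ} (P : PathSp N d → ℝ) {f g : PathSp N d → ℝ} {n : ℕ}
    {ω : PathSp N d} (h : ∀ ω', agreeOn n ω ω' → f ω' = g ω') :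
    cylSum P n f ω = cylSum P n g ω := by
  unfold cylSum
  refine Finset.sum_congr rfl fun ω' _ => ?_
  by_cases hh : agreeOn n ω ω' <;> simp [hh, h]

lemma cylSum_const {N d : ℕ} (P : PathSp N d → ℝ) (c : ℝ) (n : ℕ) (ω : PathSp N d) :
    cylSum P n (fun _ => c) ω = c * cylSum P n (fun _ => 1) ω := by
  unfold cylSum
  rw [Finset.mul_sum]
  refine Finset.sum_congr rfl fun ω' _ => ?_
  by_cases hh : agreeOn n ω ω' <;> simp [hh] <;> ring

lemma cylSum_one_nonneg {N d : ℕ} (P : PathSp N d → ℝ) (hP : ∀ ω, 0 ≤ P ω) (n : ℕ)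
    (ω : PathSp N d) : 0 ≤ cylSum P n (fun _ => 1) ω := by
  refine Finset.sum_nonneg fun ω' _ => ?_
  by_cases hh : agreeOn n ω ω' <;> simp [hh, hP ω']

lemma cylSum_zero {N d : ℕ} (P : PathSp N d → ℝ) (hP : ∀ ω, 0 ≤ P ω) (n : ℕ)
    (ω : PathSp N d) (h : cylSum P n (fun _ => 1) ω = 0) (f : PathSp N d → ℝ) :
    cylSum P n f ω = 0 := by
  have h0 : ∀ ω', agreeOn n ω ω' → P ω' = 0 := by
    intro ω' hω'
    have := (Finset.sum_eq_zero_iff_of_nonneg (fun x _ => by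
      by_cases hh : agreeOn n ω x <;> simp [hh, hP x])).mp h ω' (Finset.mem_univ _)
    simpa [hω'] using this
  refine Finset.sum_eq_zero fun ω' _ => ?_
  by_cases hh : agreeOn n ω ω' <;> simp [hh, h0]

lemma cylSum_last {N d : ℕ} (P f : PathSp N d → ℝ) (ω : PathSp N d) :
    cylSum P N f ω = P ω * f ω := by
  unfold cylSum
  have key : ∀ ω', agreeOn N ω ω' ↔ ω = ω' := fun ω' =>
    ⟨fun h => funext fun kk => h kk kk.isLt, fun h kk _ => by rw [h]⟩
  calc (∑ ω' : PathSp N d, if agreeOn N ω ω' then P ω' * f ω' else 0)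
      = ∑ ω' : PathSp N d, if ω = ω' then P ω' * f ω' else 0 := by
        refine Finset.sum_congr rfl fun ω' _ => ?_; simp only [key ω']
    _ = P ω * f ω := by rw [Finset.sum_ite_eq]; simp

lemma prod_split {N d : ℕ} (Phat : Fin N → PathSp N d → Fin (d + 1) → ℝ)
    (hpred : ∀ n : Fin N, MeasUpTo (n : ℕ) (Phat n)) {n : ℕ} (hn : n < N)
    (ω : PathSp N d) (j : Fin (d+1)) :
    (∏ i ∈ Finset.univ.filter (fun i : Fin N => (i:ℕ) < n + 1),
        Phat i (Function.update ω ⟨n,hn⟩ j) ((Function.update ω ⟨n,hn⟩ j) i))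
      = Phat ⟨n,hn⟩ ω j * ∏ i ∈ Finset.univ.filter (fun i : Fin N => (i:ℕ) < n),
          Phat i ω (ω i) := by
  set m : Fin N := ⟨n, hn⟩
  set ωj := Function.update ω m j with hωj
  have hsplit : Finset.univ.filter (fun i : Fin N => (i:ℕ) < n + 1)
      = insert m (Finset.univ.filter (fun i : Fin N => (i:ℕ) < n)) := by
    ext i
    simp only [Finset.mem_filter, Finset.mem_univ, true_and, Finset.mem_insert]
    constructor
    · intro hi
      rcases Nat.lt_succ_iff_lt_or_eq.mp hi with h | h
      · exact Or.inr h
      · exact Or.inl (Fin.ext h)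
    · rintro (rfl | h)
      · simp only [m, Fin.val_mk]; omega
      · omega
  have hmem : m ∉ Finset.univ.filter (fun i : Fin N => (i:ℕ) < n) := by
    simp only [Finset.mem_filter, Finset.mem_univ, true_and, m, Fin.val_mk]; omega
  rw [hsplit, Finset.prod_insert hmem]
  have hag : agreeOn n ω ωj := agreeOn_update hn ω j
  have h1 : Phat m ωj (ωj m) = Phat m ω j := by
    rw [hωj, Function.update_self]
    rw [hpred m ω ωj hag]
  rw [h1]
  congr 1
  refine Finset.prod_congr rfl fun i hi => ?_
  simp only [Finset.mem_filter, Finset.mem_univ, true_and] at hi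
  have hne : i ≠ m := by
    intro hh; subst hh
    simp only [m, Fin.val_mk] at hi; omega
  rw [hωj, Function.update_of_ne hne]
  have hagi : agreeOn (i:ℕ) ωj ω := fun k hk => (hag k (hk.trans hi)).symm
  exact congrFun (hpred i ωj ω hagi) (ω i)

end

noncomputable section

lemma cylSum_one_eq {N d : ℕ} (Phat : Fin N → PathSp N d → Fin (d+1) → ℝ)
    (hpred : ∀ n : Fin N, MeasUpTo (n : ℕ) (Phat n))
    (hsum : ∀ n ω, ∑ j, Phat n ω j = 1)
    (Pm : PathSp N d → ℝ) (hPm : ∀ ω, Pm ω = ∏ n, Phat n ω (ω n)) :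
    ∀ (k n : ℕ), n + k = N → ∀ ω, cylSum Pm n (fun _ => 1) ω
      = ∏ i ∈ Finset.univ.filter (fun i : Fin N => (i:ℕ) < n), Phat i ω (ω i) := by
  intro k
  induction k with
  | zero =>
    intro n hn ω
    have hh : n = N := by omega
    subst hh
    rw [cylSum_last, hPm, mul_one,
      Finset.filter_true_of_mem (fun i (_ : i ∈ Finset.univ) => i.isLt)]
  | succ k ih =>
    intro n hn ω
    have hnN : n < N := by omega
    rw [cylSum_partition Pm _ hnN ω]
    have hj : ∀ j, cylSum Pm (n+1) (fun _ => 1) (Function.update ω ⟨n,hnN⟩ j)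
        = Phat ⟨n,hnN⟩ ω j * ∏ i ∈ Finset.univ.filter (fun i : Fin N => (i:ℕ) < n),
            Phat i ω (ω i) := by
      intro j
      rw [ih (n+1) (by omega), prod_split Phat hpred hnN ω j]
    rw [Finset.sum_congr rfl (fun j _ => hj j), ← Finset.sum_mul, hsum, one_mul]

lemma alg_sum {d : ℕ} (c C : ℝ) (p : Fin (d+1) → ℝ) (hp : ∑ j, p j = 1)
    (zz a : Fin d → ℝ) (wmat : Fin (d+1) → Fin d → ℝ)
    (ha : ∀ kk, a kk = ∑ j, wmat j kk * p j) :
    ∑ j, (c - (∑ kk, a kk * zz kk) + ∑ kk, zz kk * wmat j kk) * (p j * C) = c * C := by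
  have step : ∀ j, (c - (∑ kk, a kk * zz kk) + ∑ kk, zz kk * wmat j kk) * (p j * C)
      = (c - (∑ kk, a kk * zz kk)) * C * p j + ∑ kk, zz kk * C * (wmat j kk * p j) := by
    intro j
    rw [add_mul, Finset.sum_mul]
    congr 1
    · ring
    · exact Finset.sum_congr rfl fun kk _ => by ring
  rw [Finset.sum_congr rfl fun j _ => step j, Finset.sum_add_distrib, Finset.sum_comm,
    ← Finset.mul_sum, hp, mul_one]
  have h2 : ∀ kk, (∑ j, zz kk * C * (wmat j kk * p j)) = a kk * zz kk * C := by
    intro kk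
    rw [← Finset.mul_sum, ← ha kk]; ring
  rw [Finset.sum_congr rfl fun kk _ => h2 kk, ← Finset.sum_mul]
  ring


/-- linear BSΔE: with `g_n(z) = A_nᵀ z + B_n`, `A_n = v P̂_n` for a
`Δ_d`-valued predictable `{P̂_n}` and `{B_n}` predictable, the solution is
`E^g_n(Y) = Ê[Y + Σ_{i=n+1}^N B_i | F_n]` under the measure `P̂` with path mass
`∏_n P̂_{n, ω_n}`, wherever the conditional expectation is defined. -/
theorem stmt12 (N d : ℕ) (v : Fin d → (Fin d → ℝ)) (hv : LinearIndependent ℝ v)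
    (hspan : Submodule.span ℝ (Set.range v) = ⊤)
    (w : Fin (d + 1) → (Fin d → ℝ))
    (hw0 : w 0 = -(∑ k, v k)) (hws : ∀ k : Fin d, w k.succ = v k)
    (V : Matrix (Fin d) (Fin (d + 1)) ℝ) (hV : ∀ k i, V k i = w i k)
    (Phat : Fin N → PathSp N d → Fin (d + 1) → ℝ)
    (hpred : ∀ n : Fin N, MeasUpTo (n : ℕ) (Phat n))
    (hsimplex : ∀ n ω, (∀ j, 0 ≤ Phat n ω j) ∧ ∑ j, Phat n ω j = 1)
    (A : Fin N → PathSp N d → (Fin d → ℝ)) (hA : ∀ n ω, A n ω = V.mulVec (Phat n ω))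
    (B : Fin N → PathSp N d → ℝ) (hB : ∀ n : Fin N, MeasUpTo (n : ℕ) (B n))
    (g : Fin N → PathSp N d → (Fin d → ℝ) → ℝ)
    (hgdef : ∀ n ω z, g n ω z = (∑ k, A n ω k * z k) + B n ω)
    (Pm : PathSp N d → ℝ) (hPm : ∀ ω, Pm ω = ∏ n, Phat n ω (ω n))
    (Yterm : PathSp N d → ℝ)
    (Y : Fin (N + 1) → PathSp N d → ℝ) (Z : Fin N → PathSp N d → (Fin d → ℝ))
    (hYad : ∀ n : Fin (N + 1), MeasUpTo (n : ℕ) (Y n))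
    (hZpred : ∀ n : Fin N, MeasUpTo (n : ℕ) (Z n))
    (hterm : Y (Fin.last N) = Yterm)
    (heq : ∀ (n : Fin N) (ω : PathSp N d),
      Y n.succ ω - Y n.castSucc ω
        = -(g n ω (Z n ω)) + ∑ k, Z n ω k * w (ω n) k) :
    ∀ (n : Fin (N + 1)) (ω : PathSp N d),
      0 < cylSum Pm (n : ℕ) (fun _ => 1) ω →
      Y n ω = cExp Pm (n : ℕ) (fun ω' => Yterm ω'
        + ∑ i ∈ Finset.univ.filter (fun i : Fin N => (n : ℕ) ≤ (i : ℕ)), B i ω') ω := by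
  have hsum : ∀ n ω, ∑ j, Phat n ω j = 1 := fun n ω => (hsimplex n ω).2
  have hPnonneg : ∀ ω, 0 ≤ Pm ω := fun ω => by
    rw [hPm]; exact Finset.prod_nonneg fun i _ => (hsimplex i ω).1 _
  have hmass := cylSum_one_eq Phat hpred hsum Pm hPm
  suffices H : ∀ (k : ℕ) (n : Fin (N+1)), (n:ℕ) + k = N → ∀ ω,
      0 < cylSum Pm (n:ℕ) (fun _ => 1) ω →
      Y n ω = cExp Pm (n:ℕ) (fun ω' => Yterm ω'
        + ∑ i ∈ Finset.univ.filter (fun i : Fin N => (n:ℕ) ≤ (i:ℕ)), B i ω') ω by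
    intro n ω h
    exact H (N - (n:ℕ)) n (by have := n.isLt; omega) ω h
  intro k
  induction k with
  | zero =>
    intro n hn ω hpos
    have hnl : n = Fin.last N := Fin.ext (by simp only [Fin.val_last]; omega)
    subst hnl
    rw [hterm, cExp]
    simp only [Fin.val_last] at hpos ⊢
    rw [cylSum_last] at hpos
    rw [cylSum_last, cylSum_last, mul_one] at *
    have hempty : (Finset.univ.filter (fun i : Fin N => N ≤ (i:ℕ))) = ∅ :=
      Finset.filter_false_of_mem fun i _ => Nat.not_le.mpr i.isLt
    rw [hempty, Finset.sum_empty, add_zero]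
    rw [mul_comm, mul_div_assoc, div_self hpos.ne', mul_one]
  | succ k ih =>
    intro n hn ω hpos
    have hnN : (n:ℕ) < N := by omega
    rw [cExp, eq_div_iff hpos.ne']
    conv_rhs => rw [cylSum_partition Pm _ hnN ω]
    set f' : PathSp N d → ℝ := fun ω' => Yterm ω'
        + ∑ i ∈ Finset.univ.filter (fun i : Fin N => (n:ℕ)+1 ≤ (i:ℕ)), B i ω' with hf'
    have hagj : ∀ j, agreeOn (n:ℕ) ω (Function.update ω ⟨(n:ℕ),hnN⟩ j) :=
      fun j => agreeOn_update hnN ω j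
    -- mass of sub-cylinders
    have hSj : ∀ j, cylSum Pm ((n:ℕ)+1) (fun _ => 1) (Function.update ω ⟨(n:ℕ),hnN⟩ j)
        = Phat ⟨(n:ℕ),hnN⟩ ω j * cylSum Pm (n:ℕ) (fun _ => 1) ω := by
      intro j
      rw [hmass k ((n:ℕ)+1) (by omega), hmass (k+1) (n:ℕ) (by omega),
        prod_split Phat hpred hnN ω j]
    -- inductive hypothesis applied on each sub-cylinder
    have hYsucc : ∀ j, cylSum Pm ((n:ℕ)+1) f' (Function.update ω ⟨(n:ℕ),hnN⟩ j)
        = Y (Fin.succ ⟨(n:ℕ),hnN⟩) (Function.update ω ⟨(n:ℕ),hnN⟩ j)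
          * cylSum Pm ((n:ℕ)+1) (fun _ => 1) (Function.update ω ⟨(n:ℕ),hnN⟩ j) := by
      intro j
      rcases lt_or_eq_of_le (cylSum_one_nonneg Pm hPnonneg ((n:ℕ)+1)
          (Function.update ω ⟨(n:ℕ),hnN⟩ j)) with hlt | heq0
      · have hih := ih (Fin.succ ⟨(n:ℕ),hnN⟩) (by show (n:ℕ)+1+k = N; omega)
          (Function.update ω ⟨(n:ℕ),hnN⟩ j) (by exact hlt)
        have hih' : Y (Fin.succ ⟨(n:ℕ),hnN⟩) (Function.update ω ⟨(n:ℕ),hnN⟩ j)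
            = cylSum Pm ((n:ℕ)+1) f' (Function.update ω ⟨(n:ℕ),hnN⟩ j)
              / cylSum Pm ((n:ℕ)+1) (fun _ => 1) (Function.update ω ⟨(n:ℕ),hnN⟩ j) := hih
        rw [hih']
        exact (div_mul_cancel₀ _ hlt.ne').symm
      · rw [cylSum_zero Pm hPnonneg _ _ heq0.symm f', ← heq0, mul_zero]
    -- B m is constant on each sub-cylinder
    have hBj : ∀ j, cylSum Pm ((n:ℕ)+1) (B ⟨(n:ℕ),hnN⟩) (Function.update ω ⟨(n:ℕ),hnN⟩ j)
        = B ⟨(n:ℕ),hnN⟩ ω * cylSum Pm ((n:ℕ)+1) (fun _ => 1)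
            (Function.update ω ⟨(n:ℕ),hnN⟩ j) := by
      intro j
      have hcongr : ∀ ω', agreeOn ((n:ℕ)+1) (Function.update ω ⟨(n:ℕ),hnN⟩ j) ω' →
          B ⟨(n:ℕ),hnN⟩ ω' = B ⟨(n:ℕ),hnN⟩ ω := by
        intro ω' hag'
        refine (hB ⟨(n:ℕ),hnN⟩ ω ω' ?_).symm
        intro kk hkk
        simp only [Fin.val_mk] at hkk
        exact (hagj j kk hkk).trans (hag' kk (by omega))
      rw [cylSum_congr Pm hcongr, cylSum_const]
    -- splitting the sum of B's
    have hmnotmem : (⟨(n:ℕ),hnN⟩ : Fin N)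
        ∉ Finset.univ.filter (fun i : Fin N => (n:ℕ)+1 ≤ (i:ℕ)) := by
      simp only [Finset.mem_filter, Finset.mem_univ, true_and, Fin.val_mk]; omega
    have hfilter : Finset.univ.filter (fun i : Fin N => (n:ℕ) ≤ (i:ℕ))
        = insert (⟨(n:ℕ),hnN⟩ : Fin N)
            (Finset.univ.filter (fun i : Fin N => (n:ℕ)+1 ≤ (i:ℕ))) := by
      ext i
      simp only [Finset.mem_filter, Finset.mem_univ, true_and, Finset.mem_insert]
      constructor
      · intro hi
        rcases eq_or_lt_of_le hi with h | h
        · exact Or.inl (Fin.ext (by simp only [Fin.val_mk]; omega))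
        · exact Or.inr h
      · rintro (rfl | h)
        · simp only [Fin.val_mk]; omega
        · omega
    have hfsplit : ∀ ω' : PathSp N d,
        Yterm ω' + ∑ i ∈ Finset.univ.filter (fun i : Fin N => (n:ℕ) ≤ (i:ℕ)), B i ω'
          = f' ω' + B ⟨(n:ℕ),hnN⟩ ω' := by
      intro ω'
      rw [hfilter, Finset.sum_insert hmnotmem, hf']
      ring
    -- value of Y at n+1 on each sub-cylinder
    have hYval : ∀ j, Y (Fin.succ ⟨(n:ℕ),hnN⟩) (Function.update ω ⟨(n:ℕ),hnN⟩ j)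
          + B ⟨(n:ℕ),hnN⟩ ω
        = Y n ω - (∑ kk, A ⟨(n:ℕ),hnN⟩ ω kk * Z ⟨(n:ℕ),hnN⟩ ω kk)
          + ∑ kk, Z ⟨(n:ℕ),hnN⟩ ω kk * w j kk := by
      intro j
      have h1 := heq ⟨(n:ℕ),hnN⟩ (Function.update ω ⟨(n:ℕ),hnN⟩ j)
      rw [hgdef] at h1
      have hZ : Z ⟨(n:ℕ),hnN⟩ (Function.update ω ⟨(n:ℕ),hnN⟩ j) = Z ⟨(n:ℕ),hnN⟩ ω :=
        (hZpred ⟨(n:ℕ),hnN⟩ ω _ (hagj j)).symm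
      have hA' : A ⟨(n:ℕ),hnN⟩ (Function.update ω ⟨(n:ℕ),hnN⟩ j) = A ⟨(n:ℕ),hnN⟩ ω := by
        rw [hA, hA, hpred ⟨(n:ℕ),hnN⟩ ω _ (hagj j)]
      have hBeq : B ⟨(n:ℕ),hnN⟩ (Function.update ω ⟨(n:ℕ),hnN⟩ j) = B ⟨(n:ℕ),hnN⟩ ω :=
        (hB ⟨(n:ℕ),hnN⟩ ω _ (hagj j)).symm
      have hYc : Y (Fin.castSucc ⟨(n:ℕ),hnN⟩) (Function.update ω ⟨(n:ℕ),hnN⟩ j) = Y n ω := by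
        have hcs : Fin.castSucc (⟨(n:ℕ),hnN⟩ : Fin N) = n := Fin.ext (by simp)
        rw [hcs]
        exact (hYad n ω _ (hagj j)).symm
      have hωjm : (Function.update ω ⟨(n:ℕ),hnN⟩ j) ⟨(n:ℕ),hnN⟩ = j :=
        by simp
      rw [hZ, hA', hBeq, hYc, hωjm] at h1
      linarith [h1]
    -- putting everything together
    have hstep : ∀ j, cylSum Pm ((n:ℕ)+1)
          (fun ω' => Yterm ω'
            + ∑ i ∈ Finset.univ.filter (fun i : Fin N => (n:ℕ) ≤ (i:ℕ)), B i ω')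
          (Function.update ω ⟨(n:ℕ),hnN⟩ j)
        = (Y n ω - (∑ kk, A ⟨(n:ℕ),hnN⟩ ω kk * Z ⟨(n:ℕ),hnN⟩ ω kk)
            + ∑ kk, Z ⟨(n:ℕ),hnN⟩ ω kk * w j kk)
          * (Phat ⟨(n:ℕ),hnN⟩ ω j * cylSum Pm (n:ℕ) (fun _ => 1) ω) := by
      intro j
      rw [cylSum_congr Pm (fun ω' _ => hfsplit ω'), cylSum_add, hYsucc j, hBj j, hSj j,
        ← hYval j]
      ring
    rw [Finset.sum_congr rfl fun j _ => hstep j]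
    have hAk : ∀ kk, A ⟨(n:ℕ),hnN⟩ ω kk = ∑ j, w j kk * Phat ⟨(n:ℕ),hnN⟩ ω j := by
      intro kk
      rw [hA]
      simp only [Matrix.mulVec, dotProduct, hV]
    rw [alg_sum (Y n ω) (cylSum Pm (n:ℕ) (fun _ => 1) ω) (Phat ⟨(n:ℕ),hnN⟩ ω)
      (hsum ⟨(n:ℕ),hnN⟩ ω) (Z ⟨(n:ℕ),hnN⟩ ω) (A ⟨(n:ℕ),hnN⟩ ω) w hAk]


end
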